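/- In the Gaussian location model, any estimator sequence θ̂_n satisfying P_{n,0}(θ̂_n = 0) → 1 has maximal scaled mean squared error diverging to infinity: sup_{θ∈ℝ} E_{n,θ}[n(θ̂_n − θ)²] → ∞ as n → ∞. -/

import Mathlib

open MeasureTheory ProbabilityTheory Filter Topology

open scoped ENNReal NNReal

noncomputable def lr (θ x : ℝ) : ℝ≥0∞ := ENNReal.ofReal (Real.exp (θ * x - θ ^ 2 / 2))

lemma measurable_lr (θ : ℝ) : Measurable (lr θ) :=
  ((measurable_id.const_mul θ).sub measurable_const).exp.ennreal_ofReal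

lemma gaussianPDFReal_mul_exp (θ x : ℝ) :
    gaussianPDFReal θ 1 x = gaussianPDFReal 0 1 x * Real.exp (θ * x - θ ^ 2 / 2) := by
  simp only [gaussianPDFReal, NNReal.coe_one, mul_one, sub_zero]
  rw [mul_assoc, ← Real.exp_add]
  congr 2
  ring

lemma gaussianReal_withDensity (θ : ℝ) :
    gaussianReal θ 1 = (gaussianReal 0 1).withDensity (lr θ) := by
  rw [gaussianReal_of_var_ne_zero _ one_ne_zero, gaussianReal_of_var_ne_zero _ one_ne_zero,
    ← withDensity_mul _ (measurable_gaussianPDF 0 1) (measurable_lr θ)]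
  congr 1
  ext x
  simp only [Pi.mul_apply, gaussianPDF, lr,
    ← ENNReal.ofReal_mul (gaussianPDFReal_nonneg 0 1 x)]
  rw [← gaussianPDFReal_mul_exp]

lemma lintegral_lr (θ : ℝ) : ∫⁻ x, lr θ x ∂gaussianReal 0 1 = 1 := by
  have h : (gaussianReal 0 1).withDensity (lr θ) Set.univ = 1 := by
    rw [← gaussianReal_withDensity]; simp
  rwa [withDensity_apply _ MeasurableSet.univ, setLIntegral_univ] at h

lemma lintegral_pi_prod {n : ℕ} (μ : Fin n → Measure ℝ) [∀ i, SigmaFinite (μ i)]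
    (f : Fin n → ℝ → ℝ≥0∞) (hf : ∀ i, Measurable (f i)) :
    ∫⁻ y, ∏ i, f i (y i) ∂Measure.pi μ = ∏ i, ∫⁻ x, f i x ∂μ i := by
  induction n with
  | zero => simp [lintegral_one, Measure.pi_of_empty]
  | succ n ih =>
    have h := (MeasureTheory.measurePreserving_piFinSuccAbove μ 0).symm
    rw [← h.lintegral_comp_emb (MeasurableEquiv.measurableEmbedding _)]
    simp_rw [MeasurableEquiv.piFinSuccAbove_symm_apply, Fin.insertNthEquiv,
      Fin.insertNth_zero, Equiv.coe_fn_mk, Fin.prod_univ_succ, Fin.cons_zero, Fin.cons_succ,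
      Fin.zero_succAbove, cast_eq]
    rw [lintegral_prod_mul (f := f 0) (g := fun y : Fin n → ℝ => ∏ i, f i.succ (y i))
        (hf 0).aemeasurable
      (Finset.measurable_prod Finset.univ fun i _ =>
        (hf i.succ).comp (measurable_pi_apply i)).aemeasurable,
      ih _ _ fun i => hf i.succ]

/-- Joint law of a sample of size `n` of i.i.d. `N(θ,1)` observations. -/
noncomputable def gaussP (n : ℕ) (θ : ℝ) : Measure (Fin n → ℝ) :=
  Measure.pi fun _ => gaussianReal θ 1

instance (n : ℕ) (θ : ℝ) : IsProbabilityMeasure (gaussP n θ) := by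
  unfold gaussP; infer_instance

lemma gaussP_withDensity (n : ℕ) (θ : ℝ) :
    gaussP n θ = (gaussP n 0).withDensity (fun y => ∏ i, lr θ (y i)) := by
  refine Measure.pi_eq fun s hs => ?_
  rw [withDensity_apply _ (MeasurableSet.univ_pi hs),
    ← lintegral_indicator (MeasurableSet.univ_pi hs) _]
  have key : ∀ y : Fin n → ℝ, (Set.univ.pi s).indicator (fun y => ∏ i, lr θ (y i)) y
      = ∏ i, (s i).indicator (lr θ) (y i) := by
    intro y
    by_cases hy : y ∈ Set.univ.pi s
    · rw [Set.indicator_of_mem hy]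
      exact Finset.prod_congr rfl fun i _ => (Set.indicator_of_mem (hy i trivial) _).symm
    · rw [Set.indicator_of_notMem hy]
      rw [Set.mem_univ_pi] at hy
      push_neg at hy
      obtain ⟨i, hi⟩ := hy
      exact (Finset.prod_eq_zero (Finset.mem_univ i) (Set.indicator_of_notMem hi _)).symm
  simp_rw [key]
  rw [show gaussP n 0 = Measure.pi (fun _ : Fin n => gaussianReal 0 1) from rfl,
    lintegral_pi_prod _ _ (fun i => (measurable_lr θ).indicator (hs i))]
  refine Finset.prod_congr rfl fun i _ => ?_
  rw [lintegral_indicator (hs i) _, ← withDensity_apply _ (hs i), ← gaussianReal_withDensity]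

lemma lr_sq (θ x : ℝ) : lr θ x * lr θ x = ENNReal.ofReal (Real.exp (θ ^ 2)) * lr (2 * θ) x := by
  unfold lr
  rw [← ENNReal.ofReal_mul (Real.exp_nonneg _), ← ENNReal.ofReal_mul (Real.exp_nonneg _),
    ← Real.exp_add, ← Real.exp_add]
  congr 2
  ring

lemma lintegral_lr_sq (θ : ℝ) :
    ∫⁻ x, lr θ x * lr θ x ∂gaussianReal 0 1 = ENNReal.ofReal (Real.exp (θ ^ 2)) := by
  simp_rw [lr_sq]
  rw [lintegral_const_mul _ (measurable_lr (2 * θ)), lintegral_lr, mul_one]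

lemma lintegral_prod_lr_sq (n : ℕ) (θ : ℝ) :
    ∫⁻ y, (∏ i, lr θ (y i)) * ∏ i, lr θ (y i) ∂gaussP n 0
      = ENNReal.ofReal (Real.exp (n * θ ^ 2)) := by
  have key : ∀ y : Fin n → ℝ, (∏ i, lr θ (y i)) * ∏ i, lr θ (y i)
      = ∏ i, (lr θ (y i) * lr θ (y i)) := fun y => Finset.prod_mul_distrib.symm
  simp_rw [key]
  rw [show gaussP n 0 = Measure.pi (fun _ : Fin n => gaussianReal 0 1) from rfl,
    lintegral_pi_prod _ (fun _ x => lr θ x * lr θ x) (fun _ => (measurable_lr θ).mul (measurable_lr θ))]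
  simp_rw [lintegral_lr_sq]
  rw [Finset.prod_const, Finset.card_univ, Fintype.card_fin,
    ← ENNReal.ofReal_pow (Real.exp_nonneg _), ← Real.exp_nat_mul]

lemma gaussP_le_CS (n : ℕ) (θ : ℝ) {B : Set (Fin n → ℝ)} (hB : MeasurableSet B) :
    gaussP n θ B ≤ (gaussP n 0 B) ^ (1/2 : ℝ)
      * (ENNReal.ofReal (Real.exp (n * θ ^ 2))) ^ (1/2 : ℝ) := by
  have hG : Measurable fun y : Fin n → ℝ => ∏ i, lr θ (y i) :=
    Finset.measurable_prod _ fun i _ => (measurable_lr θ).comp (measurable_pi_apply i)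
  rw [gaussP_withDensity n θ, withDensity_apply _ hB, ← lintegral_indicator hB _]
  set F : (Fin n → ℝ) → ℝ≥0∞ := fun y => ∏ i, lr θ (y i) with hF
  have h1 : ∀ y, B.indicator F y = ((B.indicator (fun _ => (1:ℝ≥0∞)) * F)) y := by
    intro y; by_cases hy : y ∈ B <;> simp [hy]
  calc ∫⁻ y, B.indicator F y ∂gaussP n 0
      = ∫⁻ y, ((B.indicator (fun _ => (1:ℝ≥0∞)) * F)) y ∂gaussP n 0 := by
        simp_rw [h1]
    _ ≤ (∫⁻ y, B.indicator (fun _ => (1:ℝ≥0∞)) y ^ (2:ℝ) ∂gaussP n 0) ^ (1/2:ℝ)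
        * (∫⁻ y, F y ^ (2:ℝ) ∂gaussP n 0) ^ (1/2:ℝ) :=
        ENNReal.lintegral_mul_le_Lp_mul_Lq _
          Real.HolderConjugate.two_two
          ((measurable_one.indicator hB).aemeasurable) hG.aemeasurable
    _ = _ := by
        congr 1
        · congr 1
          rw [← lintegral_indicator_one hB]
          congr 1; ext y
          by_cases hy : y ∈ B <;>
            simp [hy, ENNReal.zero_rpow_of_pos (by norm_num : (0:ℝ) < 2)]
        · congr 1
          rw [← lintegral_prod_lr_sq n θ]
          congr 1; ext y
          rw [show (2:ℝ) = ((2:ℕ):ℝ) by norm_num, ENNReal.rpow_natCast, sq]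

theorem stmt_1
    (est : (n : ℕ) → (Fin n → ℝ) → ℝ)
    (hmeas : ∀ n, Measurable (est n))
    (hsparse : Tendsto (fun n => gaussP n 0 {y | est n y = 0}) atTop (𝓝 1)) :
    Tendsto (fun n : ℕ => ⨆ θ : ℝ,
        ∫⁻ y, ENNReal.ofReal ((n : ℝ) * (est n y - θ) ^ 2) ∂(gaussP n θ))
      atTop (𝓝 ⊤) := by
  rw [ENNReal.tendsto_nhds_top_iff_nnreal]
  intro x
  set c : ℝ := 2 * ((x : ℝ) + 1) with hc
  have hc0 : 0 < c := by positivity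
  set E : ℝ≥0∞ := ENNReal.ofReal (Real.exp c) with hE
  have hE0 : E ≠ 0 := by simp [hE, Real.exp_pos]
  have hEtop : E ≠ ⊤ := ENNReal.ofReal_ne_top
  set δ : ℝ≥0∞ := (4 * E)⁻¹ with hδ
  have hδ0 : δ ≠ 0 := by
    simp [hδ, ENNReal.inv_ne_zero, ENNReal.mul_ne_top, hEtop]
  have hδle : δ ≤ 1 := by
    rw [hδ]
    refine ENNReal.inv_le_one.mpr ?_
    calc (1:ℝ≥0∞) ≤ 4 := by norm_num
    _ = 4 * 1 := by ring
    _ ≤ 4 * E := by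
        gcongr
        rw [hE, show (1:ℝ≥0∞) = ENNReal.ofReal 1 by simp]
        exact ENNReal.ofReal_le_ofReal (by nlinarith [Real.add_one_le_exp c])
  have hev1 : ∀ᶠ n in atTop, gaussP n 0 {y | est n y = 0}ᶜ ≤ δ := by
    have h1δ : (1:ℝ≥0∞) - δ < 1 := ENNReal.sub_lt_self ENNReal.one_ne_top one_ne_zero hδ0
    filter_upwards [hsparse.eventually (eventually_gt_nhds h1δ)] with n hn
    have hA : MeasurableSet {y : Fin n → ℝ | est n y = 0} :=
      (hmeas n) (measurableSet_singleton 0)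
    rw [prob_compl_eq_one_sub hA]
    rw [tsub_le_iff_right]
    calc (1:ℝ≥0∞) = δ + (1 - δ) := (add_tsub_cancel_of_le hδle).symm
    _ ≤ δ + gaussP n 0 {y | est n y = 0} := add_le_add_right hn.le δ
  filter_upwards [hev1, eventually_ge_atTop 1] with n hn hn1
  set θ : ℝ := Real.sqrt (c / n) with hθ
  have hn0 : (0:ℝ) < n := by exact_mod_cast hn1
  have hθsq : (n : ℝ) * θ ^ 2 = c := by
    rw [hθ, Real.sq_sqrt (by positivity)]
    field_simp
  set A : Set (Fin n → ℝ) := {y | est n y = 0} with hA'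
  have hA : MeasurableSet A := (hmeas n) (measurableSet_singleton 0)
  have hbad : gaussP n θ Aᶜ ≤ 2⁻¹ := by
    calc gaussP n θ Aᶜ
        ≤ (gaussP n 0 Aᶜ) ^ (1/2:ℝ) * (ENNReal.ofReal (Real.exp (n * θ^2))) ^ (1/2:ℝ) :=
          gaussP_le_CS n θ hA.compl
    _ = (gaussP n 0 Aᶜ * E) ^ (1/2:ℝ) := by
        rw [hθsq, ← hE, ENNReal.mul_rpow_of_nonneg _ _ (by norm_num)]
    _ ≤ (δ * E) ^ (1/2:ℝ) := by gcongr
    _ ≤ ((4:ℝ≥0∞)⁻¹) ^ (1/2:ℝ) := by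
        gcongr
        rw [hδ, ENNReal.mul_inv (Or.inl (by norm_num)) (Or.inl (by norm_num)), mul_assoc,
          ENNReal.inv_mul_cancel hE0 hEtop, mul_one]
    _ = 2⁻¹ := by
        rw [show ((4:ℝ≥0∞))⁻¹ = (2⁻¹) ^ (2:ℕ) by rw [pow_two, ← ENNReal.mul_inv] <;> norm_num,
          ← ENNReal.rpow_natCast (2⁻¹ : ℝ≥0∞) 2, ← ENNReal.rpow_mul]
        norm_num
  have hgood : (2⁻¹ : ℝ≥0∞) ≤ gaussP n θ A := by
    have h := prob_compl_eq_one_sub (μ := gaussP n θ) hA.compl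
    rw [compl_compl] at h
    rw [h]
    have h2 : (1:ℝ≥0∞) - 2⁻¹ ≤ 1 - gaussP n θ Aᶜ := tsub_le_tsub_left hbad 1
    rwa [ENNReal.one_sub_inv_two] at h2
  have hrisk : ENNReal.ofReal c * 2⁻¹
      ≤ ∫⁻ y, ENNReal.ofReal ((n : ℝ) * (est n y - θ) ^ 2) ∂gaussP n θ := by
    calc ENNReal.ofReal c * 2⁻¹ ≤ ENNReal.ofReal c * gaussP n θ A := by gcongr
    _ = ∫⁻ y in A, ENNReal.ofReal c ∂gaussP n θ := (setLIntegral_const A _).symm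
    _ = ∫⁻ y in A, ENNReal.ofReal ((n : ℝ) * (est n y - θ) ^ 2) ∂gaussP n θ := by
        refine setLIntegral_congr_fun hA (fun y hy => ?_)
        have : est n y = 0 := hy
        rw [this]
        congr 1
        rw [← hθsq]; ring
    _ ≤ _ := setLIntegral_le_lintegral _ _
  have hlt : (x : ℝ≥0∞) < ENNReal.ofReal c * 2⁻¹ := by
    have : ENNReal.ofReal c * 2⁻¹ = ENNReal.ofReal ((x:ℝ) + 1) := by
      rw [hc, ENNReal.ofReal_mul (by norm_num), show ENNReal.ofReal 2 = 2 by norm_num,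
        mul_comm (2:ℝ≥0∞), mul_assoc, ENNReal.mul_inv_cancel (by norm_num) (by norm_num), mul_one]
    rw [this, ENNReal.ofReal_add (x.coe_nonneg) zero_le_one, ENNReal.ofReal_coe_nnreal,
      ENNReal.ofReal_one]
    exact ENNReal.lt_add_right ENNReal.coe_ne_top one_ne_zero
  exact hlt.trans_le (hrisk.trans (le_iSup (fun θ : ℝ =>
    ∫⁻ y, ENNReal.ofReal ((n : ℝ) * (est n y - θ) ^ 2) ∂gaussP n θ) θ))
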